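/- Let X be a finite-dimensional real inner product space, g : X → ℝ a convex function with min_{x∈X} g(x) < 0, C := {x : g(x) ≤ 0}, and x̄ ∈ X with x̄ ∉ C. Let d̄ := d(x̄, C). Suppose sequences {x_k}_{k≥0} ⊆ X, closed halfspaces {H_k}_{k≥0}, and {s_k}_{k≥0} ⊆ X satisfy, for all k ≥ 0: C ⊆ H_k; x_k is the metric projection of x̄ onto H_k; g(x_k) > 0; s_k ∈ ∂g(x_k); x_{k+1} is the metric projection of x̄ onto H_k ∩ C̃_k, where C̃_k := {x : g(x_k) + ⟨x − x_k, s_k⟩ ≤ 0}; and H_{k+1} := {x : ⟨x̄ − x_{k+1}, x − x_{k+1}⟩ ≤ 0}. Then, setting d_k := ‖x̄ − x_k‖, there exist constants γ̃ ≥ γ > 0 such that for all k ≥ 0, d_{k+1}² ≥ d_k² + (γ/γ̃)²·(d̄ − d_k)². -/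

import Mathlib

open RealInnerProductSpace

/-- For the Dykstra-type iteration with subgradient outer approximations,
there are constants `γ̃ ≥ γ > 0` such that `d_{k+1}² ≥ d_k² + (γ/γ̃)²(d̄ - d_k)²`. -/
theorem dykstra_level_set_distance_recurrence
    {X : Type*} [NormedAddCommGroup X] [InnerProductSpace ℝ X] [FiniteDimensional ℝ X]
    (g : X → ℝ) (hg : ConvexOn ℝ Set.univ g)
    (hmin : ∃ x₀ : X, g x₀ < 0 ∧ ∀ x, g x₀ ≤ g x)
    (C : Set X) (hC : C = {x : X | g x ≤ 0})
    (xbar : X) (hxbarC : xbar ∉ C)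
    (dbar : ℝ) (hdbar : dbar = Metric.infDist xbar C)
    (x : ℕ → X) (H : ℕ → Set X) (s : ℕ → X)
    (hHhalf : ∀ k : ℕ, ∃ (a : X) (b : ℝ), a ≠ 0 ∧ H k = {y : X | ⟪a, y⟫ ≤ b})
    (hCH : ∀ k : ℕ, C ⊆ H k)
    (hxk : ∀ k : ℕ, x k ∈ H k)
    (hxkproj : ∀ k : ℕ, ∀ y ∈ H k, ‖xbar - x k‖ ≤ ‖xbar - y‖)
    (hgpos : ∀ k : ℕ, 0 < g (x k))
    (hs : ∀ k : ℕ, ∀ y : X, g (x k) + ⟪s k, y - x k⟫ ≤ g y)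
    (hxk1 : ∀ k : ℕ,
      x (k + 1) ∈ H k ∩ {y : X | g (x k) + ⟪y - x k, s k⟫ ≤ 0})
    (hxk1proj : ∀ k : ℕ, ∀ y ∈ H k ∩ {y : X | g (x k) + ⟪y - x k, s k⟫ ≤ 0},
      ‖xbar - x (k + 1)‖ ≤ ‖xbar - y‖)
    (hHk1 : ∀ k : ℕ,
      H (k + 1) = {y : X | ⟪xbar - x (k + 1), y - x (k + 1)⟫ ≤ 0}) :
    ∃ (γt γ : ℝ), 0 < γ ∧ γ ≤ γt ∧ ∀ k : ℕ,
      ‖xbar - x k‖ ^ 2 + (γ / γt) ^ 2 * (dbar - ‖xbar - x k‖) ^ 2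
        ≤ ‖xbar - x (k + 1)‖ ^ 2 := by
  obtain ⟨x₀, hx0neg, hx0min⟩ := hmin
  have hx0C : x₀ ∈ C := by rw [hC]; exact le_of_lt hx0neg
  have hCne : C.Nonempty := ⟨x₀, hx0C⟩
  have hgxbar : 0 < g xbar := by
    by_contra h
    exact hxbarC (by rw [hC]; exact not_lt.1 h)
  have hdbar0 : 0 ≤ dbar := hdbar ▸ Metric.infDist_nonneg
  set m : ℝ := -g x₀ with hm
  have hm0 : 0 < m := by simp only [hm]; linarith
  have hxbarne : xbar ≠ x₀ := fun h => hxbarC (h ▸ hx0C)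
  set R : ℝ := dbar + ‖xbar - x₀‖ with hR
  have hR0 : 0 < R := by
    have : 0 < ‖xbar - x₀‖ := by
      rw [norm_pos_iff, sub_ne_zero]; exact hxbarne
    simp only [hR]; linarith
  set γ : ℝ := m / R with hγ
  have hγ0 : 0 < γ := div_pos hm0 hR0
  have hgc : Continuous g := by
    have := hg.continuousOn isOpen_univ
    rwa [continuousOn_univ] at this
  obtain ⟨M, hM⟩ : ∃ M, ∀ z ∈ Metric.closedBall xbar (dbar + 1), g z ≤ M := by
    obtain ⟨z, _, hz⟩ := (isCompact_closedBall xbar (dbar + 1)).exists_isMaxOn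
      ⟨xbar, by simp; linarith⟩ hgc.continuousOn
    exact ⟨g z, fun w hw => hz hw⟩
  set γt : ℝ := max (M - g x₀) γ with hγt
  have hγγt : γ ≤ γt := le_max_right _ _
  have hγt0 : 0 < γt := lt_of_lt_of_le hγ0 hγγt
  refine ⟨γt, γ, hγ0, hγγt, fun k => ?_⟩
  -- d_k ≤ dbar
  have hdkle : ‖xbar - x k‖ ≤ dbar := by
    rw [hdbar]
    by_contra h
    push_neg at h
    obtain ⟨c, hc, hlt⟩ := (Metric.infDist_lt_iff hCne).1 h
    rw [dist_eq_norm] at hlt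
    exact absurd (hxkproj k c (hCH k hc)) (not_le.2 hlt)
  -- convexity of H k
  have hHconv : Convex ℝ (H k) := by
    obtain ⟨a, b, _, hab⟩ := hHhalf k
    rw [hab]
    exact convex_halfSpace_le
      ⟨fun y z => inner_add_right a y z, fun c y => real_inner_smul_right a y c⟩ b
  -- obtuse angle property of the projection onto H k
  haveI : Nonempty (H k) := ⟨⟨x k, hxk k⟩⟩
  have heq : ‖xbar - x k‖ = ⨅ w : H k, ‖xbar - w‖ := by
    apply le_antisymm
    · exact le_ciInf fun w => hxkproj k w w.2
    · exact ciInf_le ⟨0, by rintro _ ⟨w, rfl⟩; exact norm_nonneg _⟩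
        (⟨x k, hxk k⟩ : H k)
  have hobt : ⟪xbar - x k, x (k + 1) - x k⟫ ≤ 0 :=
    (norm_eq_iInf_iff_real_inner_le_zero hHconv (hxk k)).1 heq _ (hxk1 k).1
  -- Pythagoras-type inequality
  have hsq : ‖xbar - x k‖ ^ 2 + ‖x (k + 1) - x k‖ ^ 2 ≤ ‖xbar - x (k + 1)‖ ^ 2 := by
    have hrw : xbar - x (k + 1) = (xbar - x k) - (x (k + 1) - x k) := by abel
    have hexp : ‖(xbar - x k) - (x (k + 1) - x k)‖ ^ 2
        = ‖xbar - x k‖ ^ 2 - 2 * ⟪xbar - x k, x (k + 1) - x k⟫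
          + ‖x (k + 1) - x k‖ ^ 2 := norm_sub_sq_real _ _
    rw [hrw, hexp]
    linarith
  -- g (x k) ≤ ‖s k‖ * ‖Δ‖
  have h3 : g (x k) ≤ ‖s k‖ * ‖x (k + 1) - x k‖ := by
    have h := (hxk1 k).2
    simp only [Set.mem_setOf_eq] at h
    have habs := abs_real_inner_le_norm (x (k + 1) - x k) (s k)
    have h1 : -⟪x (k + 1) - x k, s k⟫ ≤ |⟪x (k + 1) - x k, s k⟫| := neg_le_abs _
    calc g (x k) ≤ -⟪x (k + 1) - x k, s k⟫ := by linarith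
      _ ≤ |⟪x (k + 1) - x k, s k⟫| := h1
      _ ≤ ‖x (k + 1) - x k‖ * ‖s k‖ := habs
      _ = ‖s k‖ * ‖x (k + 1) - x k‖ := mul_comm _ _
  -- ‖s k‖ ≤ γt
  have h5 : ‖s k‖ ≤ γt := by
    rcases eq_or_ne (s k) 0 with h0 | h0
    · rw [h0, norm_zero]; exact le_of_lt hγt0
    · have hsn : (0:ℝ) < ‖s k‖ := norm_pos_iff.2 h0
      set u : X := ‖s k‖⁻¹ • s k with hu
      have hnu : ‖u‖ = 1 := by
        rw [hu, norm_smul, norm_inv, norm_norm, inv_mul_cancel₀ (ne_of_gt hsn)]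
      have hin : ⟪s k, (x k + u) - x k⟫ = ‖s k‖ := by
        rw [add_sub_cancel_left, hu, real_inner_smul_right, real_inner_self_eq_norm_sq]
        field_simp
      have hball : x k + u ∈ Metric.closedBall xbar (dbar + 1) := by
        rw [Metric.mem_closedBall, dist_comm, dist_eq_norm]
        have hrw : xbar - (x k + u) = (xbar - x k) - u := by abel
        rw [hrw]
        calc ‖(xbar - x k) - u‖ ≤ ‖xbar - x k‖ + ‖u‖ := norm_sub_le _ _
          _ ≤ dbar + 1 := by rw [hnu]; linarith
      have hy := hs k (x k + u)
      rw [hin] at hy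
      have hMu := hM _ hball
      have hg0 : g x₀ ≤ g (x k) := hx0min _
      have : ‖s k‖ ≤ M - g x₀ := by linarith
      exact this.trans (le_max_left _ _)
  -- γ * (dbar - d_k) ≤ g (x k)
  have h4 : γ * (dbar - ‖xbar - x k‖) ≤ g (x k) := by
    set gk := g (x k) with hgk
    have hgk0 : 0 < gk := hgpos k
    set lam : ℝ := gk / (gk + m) with hlam
    have hden : 0 < gk + m := by linarith
    have hlam0 : 0 ≤ lam := le_of_lt (div_pos hgk0 hden)
    have hlam1 : lam ≤ 1 := by
      rw [hlam, div_le_one hden]; linarith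
    set z : X := lam • x₀ + (1 - lam) • x k with hz
    have hzC : z ∈ C := by
      rw [hC]
      have hcv := hg.2 (Set.mem_univ x₀) (Set.mem_univ (x k)) hlam0
        (sub_nonneg.2 hlam1) (by ring)
      have hgx0 : g x₀ = -m := by rw [hm]; ring
      have h1 : lam * (gk + m) = gk := by
        rw [hlam]; field_simp
      have hval : lam * g x₀ + (1 - lam) * gk = 0 := by
        rw [hgx0]; linear_combination -h1
      simp only [Set.mem_setOf_eq, smul_eq_mul] at hcv ⊢
      rw [hz]
      linarith
    have hdz : dist (x k) z = lam * ‖x k - x₀‖ := by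
      rw [dist_eq_norm]
      have hrw : x k - z = lam • (x k - x₀) := by
        rw [hz]; module
      rw [hrw, norm_smul, Real.norm_eq_abs, abs_of_nonneg hlam0]
    have hRb : ‖x k - x₀‖ ≤ R := by
      calc ‖x k - x₀‖ ≤ ‖x k - xbar‖ + ‖xbar - x₀‖ := norm_sub_le_norm_sub_add_norm_sub _ _ _
        _ ≤ dbar + ‖xbar - x₀‖ := by
            rw [norm_sub_rev]; linarith
        _ = R := hR.symm
    have hinf : Metric.infDist (x k) C ≤ gk * R / m := by
      calc Metric.infDist (x k) C ≤ dist (x k) z := Metric.infDist_le_dist_of_mem hzC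
        _ = lam * ‖x k - x₀‖ := hdz
        _ ≤ (gk / m) * R := by
            apply mul_le_mul _ hRb (norm_nonneg _) (le_of_lt (div_pos hgk0 hm0))
            rw [hlam, div_le_div_iff₀ hden hm0]
            nlinarith
        _ = gk * R / m := by ring
    have htri : dbar ≤ Metric.infDist (x k) C + ‖xbar - x k‖ := by
      rw [hdbar]
      have := Metric.infDist_le_infDist_add_dist (x := xbar) (y := x k) (s := C)
      rw [dist_eq_norm] at this
      exact this
    have hkey : dbar - ‖xbar - x k‖ ≤ gk * R / m := le_trans (by linarith) hinf
    rw [hγ]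
    rw [div_mul_eq_mul_div, div_le_iff₀ hR0]
    rw [le_div_iff₀ hm0] at hkey
    nlinarith
  -- combine
  have hΔ : γ / γt * (dbar - ‖xbar - x k‖) ≤ ‖x (k + 1) - x k‖ := by
    have h35 : g (x k) ≤ γt * ‖x (k + 1) - x k‖ :=
      h3.trans (mul_le_mul_of_nonneg_right h5 (norm_nonneg _))
    rw [div_mul_eq_mul_div, div_le_iff₀ hγt0]
    calc γ * (dbar - ‖xbar - x k‖) ≤ g (x k) := h4
      _ ≤ γt * ‖x (k + 1) - x k‖ := h35
      _ = ‖x (k + 1) - x k‖ * γt := mul_comm _ _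
  have ha : 0 ≤ dbar - ‖xbar - x k‖ := by linarith
  have hfinal : (γ / γt) ^ 2 * (dbar - ‖xbar - x k‖) ^ 2 ≤ ‖x (k + 1) - x k‖ ^ 2 := by
    have hnn : 0 ≤ γ / γt * (dbar - ‖xbar - x k‖) :=
      mul_nonneg (le_of_lt (div_pos hγ0 hγt0)) ha
    calc (γ / γt) ^ 2 * (dbar - ‖xbar - x k‖) ^ 2
        = (γ / γt * (dbar - ‖xbar - x k‖)) ^ 2 := by ring
      _ ≤ ‖x (k + 1) - x k‖ ^ 2 := by
          apply pow_le_pow_left₀ hnn hΔ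
  linarith
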